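/- arXiv:2007.08820 — 3 statements merged into one kernel-verified Lean document; each statement's English description precedes it below -/
import Mathlib

section
/- Among all p×q matrices π with nonnegative entries, prescribed row sums μ_u, prescribed column sums ν_v (with ∑ μ = ∑ ν = 1), and assuming p·min_u μ_u + q·min_v ν_v ≥ 1, the matrix π⁺(u,v) = μ_u/q + ν_v/p − 1/(pq) uniquely minimizes the squared deviation ∑_{u,v} (π(u,v) − 1/(pq))^2. -/
theorem stmt3 (p q : ℕ) (hp : 0 < p) (hq : 0 < q)
    (μ : Fin p → ℝ) (ν : Fin q → ℝ)
    (hμ0 : ∀ u, 0 ≤ μ u) (hν0 : ∀ v, 0 ≤ ν v)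
    (hμ : ∑ u, μ u = 1) (hν : ∑ v, ν v = 1)
    (hcond : (p : ℝ) * Finset.univ.inf' (Finset.univ_nonempty_iff.mpr ⟨⟨0, hp⟩⟩) μ
        + (q : ℝ) * Finset.univ.inf' (Finset.univ_nonempty_iff.mpr ⟨⟨0, hq⟩⟩) ν ≥ 1) :
    ∀ π : Fin p → Fin q → ℝ,
      (∀ u v, 0 ≤ π u v) →
      (∀ u, ∑ v, π u v = μ u) →
      (∀ v, ∑ u, π u v = ν v) →
      (∑ u, ∑ v, ((μ u / q + ν v / p - 1 / (p * q)) - 1 / (p * q)) ^ 2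
          ≤ ∑ u, ∑ v, (π u v - 1 / (p * q)) ^ 2) ∧
      (∑ u, ∑ v, (π u v - 1 / (p * q)) ^ 2
          = ∑ u, ∑ v, ((μ u / q + ν v / p - 1 / (p * q)) - 1 / (p * q)) ^ 2 →
        π = fun u v => μ u / q + ν v / p - 1 / (p * q)) := by
  intro π hpos hrow hcol
  have hp' : (p:ℝ) ≠ 0 := Nat.cast_ne_zero.mpr hp.ne'
  have hq' : (q:ℝ) ≠ 0 := Nat.cast_ne_zero.mpr hq.ne'
  set c : ℝ := 1 / (p * q) with hc
  set T : Fin p → Fin q → ℝ := fun u v => μ u / q + ν v / p - c with hT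
  have hTrow : ∀ u, ∑ v, T u v = μ u := by
    intro u
    simp only [hT, Finset.sum_sub_distrib, Finset.sum_add_distrib, Finset.sum_const,
      Finset.card_univ, Fintype.card_fin, nsmul_eq_mul, ← Finset.sum_div, hν, hc]
    field_simp
    ring
  have hTcol : ∀ v, ∑ u, T u v = ν v := by
    intro v
    simp only [hT, Finset.sum_sub_distrib, Finset.sum_add_distrib, Finset.sum_const,
      Finset.card_univ, Fintype.card_fin, nsmul_eq_mul, ← Finset.sum_div, hμ, hc]
    field_simp
    ring
  set D : Fin p → Fin q → ℝ := fun u v => π u v - T u v with hD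
  have hDrow : ∀ u, ∑ v, D u v = 0 := by
    intro u; simp [hD, Finset.sum_sub_distrib, hrow u, hTrow u]
  have hDcol : ∀ v, ∑ u, D u v = 0 := by
    intro v; simp [hD, Finset.sum_sub_distrib, hcol v, hTcol v]
  have cross : ∑ u, ∑ v, D u v * (T u v - c) = 0 := by
    have expand : ∀ u v, D u v * (T u v - c)
        = (μ u / q - c) * D u v + (ν v / p - c) * D u v := by
      intro u v; simp only [hT]; ring
    calc ∑ u, ∑ v, D u v * (T u v - c)
        = ∑ u, ∑ v, ((μ u / q - c) * D u v + (ν v / p - c) * D u v) := by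
          simp_rw [expand]
      _ = ∑ u, (μ u / q - c) * (∑ v, D u v) + ∑ v, (ν v / p - c) * (∑ u, D u v) := by
          simp_rw [Finset.sum_add_distrib]
          congr 1
          · simp_rw [← Finset.mul_sum]
          · rw [Finset.sum_comm]
            simp_rw [← Finset.mul_sum]
      _ = 0 := by simp [hDrow, hDcol]
  have key : ∑ u, ∑ v, (π u v - c) ^ 2
      = ∑ u, ∑ v, D u v ^ 2 + ∑ u, ∑ v, (T u v - c) ^ 2 := by
    have expand : ∀ u v, (π u v - c) ^ 2
        = D u v ^ 2 + (T u v - c) ^ 2 + 2 * (D u v * (T u v - c)) := by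
      intro u v; simp only [hD]; ring
    simp_rw [expand, Finset.sum_add_distrib, ← Finset.mul_sum]
    rw [cross]
    ring
  have hD2 : 0 ≤ ∑ u, ∑ v, D u v ^ 2 :=
    Finset.sum_nonneg fun u _ => Finset.sum_nonneg fun v _ => sq_nonneg _
  constructor
  · rw [key]; linarith
  · intro heq
    rw [key] at heq
    have hz : ∑ u, ∑ v, D u v ^ 2 = 0 := by linarith
    have : ∀ u ∈ Finset.univ, ∑ v, D u v ^ 2 = 0 := by
      intro u _
      have := (Finset.sum_eq_zero_iff_of_nonneg
        (fun u _ => Finset.sum_nonneg fun v _ => sq_nonneg (D u v))).mp hz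
      exact this u (Finset.mem_univ u)
    funext u v
    have h2 := (Finset.sum_eq_zero_iff_of_nonneg
      (fun v _ => sq_nonneg (D u v))).mp (this u (Finset.mem_univ u)) v (Finset.mem_univ v)
    have : D u v = 0 := by nlinarith [sq_nonneg (D u v)]
    simpa [hD, sub_eq_zero] using this
end

section
/- A p×q matrix π which is a probability matrix (nonnegative entries summing to 1) satisfies the full Monge equality π(u,v) + π(u',v') = π(u',v) + π(u,v') for all u,u',v,v' if and only if π(u,v) = μ_u/q + ν_v/p − 1/(pq) for all u,v, where μ and ν are the row and column marginals of π. -/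
theorem stmt11 (p q : ℕ) (hp : 0 < p) (hq : 0 < q)
    (π : Fin p → Fin q → ℝ) (hpos : ∀ u v, 0 ≤ π u v)
    (hsum : ∑ u, ∑ v, π u v = 1) :
    (∀ (u u' : Fin p) (v v' : Fin q),
        π u v + π u' v' = π u' v + π u v') ↔
    (∀ u v, π u v = (∑ w, π u w) / q + (∑ t, π t v) / p - 1 / (p * q)) := by
  have hp' : (p : ℝ) ≠ 0 := Nat.cast_ne_zero.mpr hp.ne'
  have hq' : (q : ℝ) ≠ 0 := Nat.cast_ne_zero.mpr hq.ne'
  constructor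
  · intro h u v
    have key : ∑ u' : Fin p, ∑ v' : Fin q, (π u v + π u' v')
        = ∑ u' : Fin p, ∑ v' : Fin q, (π u' v + π u v') := by
      refine Finset.sum_congr rfl fun u' _ => Finset.sum_congr rfl fun v' _ => h u u' v v'
    simp only [Finset.sum_add_distrib, Finset.sum_const, Finset.card_univ,
      Fintype.card_fin, nsmul_eq_mul, hsum] at key
    -- key : p * (q * π u v) + 1 = q * ∑ u', π u' v + p * ∑ v', π u v' (roughly)
    rw [← Finset.mul_sum] at key
    field_simp
    linear_combination key
  · intro h u u' v v'
    rw [h u v, h u' v', h u' v, h u v']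
    ring
end

section
/- Let π be a p×q probability matrix with marginals μ_u = ∑_v π(u,v) and ν_v = ∑_u π(u,v). Then the Condorcet equilibrium identity (p−1)(q−1)·∑_{u,v} π(u,v)² + ∑_{u,v} π(u,v)(1 − μ_u − ν_v + π(u,v)) = (p−1)·∑_{u,v} π(u,v)(μ_u − π(u,v)) + (q−1)·∑_{u,v} π(u,v)(ν_v − π(u,v)) holds if and only if π(u,v) = μ_u/q + ν_v/p − 1/(pq) for all u, v. -/
theorem stmt14 (p q : ℕ) (hp : 2 ≤ p) (hq : 2 ≤ q)
    (π : Fin p → Fin q → ℝ) (hpos : ∀ u v, 0 ≤ π u v)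
    (hsum : ∑ u, ∑ v, π u v = 1)
    (μ : Fin p → ℝ) (ν : Fin q → ℝ)
    (hμ : ∀ u, μ u = ∑ v, π u v) (hν : ∀ v, ν v = ∑ u, π u v) :
    (((p : ℝ) - 1) * ((q : ℝ) - 1) * ∑ u, ∑ v, (π u v) ^ 2
        + ∑ u, ∑ v, π u v * (1 - μ u - ν v + π u v)
      = ((p : ℝ) - 1) * ∑ u, ∑ v, π u v * (μ u - π u v)
        + ((q : ℝ) - 1) * ∑ u, ∑ v, π u v * (ν v - π u v)) ↔
    (∀ u v, π u v = μ u / q + ν v / p - 1 / (p * q)) := by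
  have hp0 : (0:ℝ) < p := by exact_mod_cast (by omega : 0 < p)
  have hq0 : (0:ℝ) < q := by exact_mod_cast (by omega : 0 < q)
  have hμ1 : ∑ u, μ u = 1 := by
    simp only [hμ]; exact hsum
  have hν1 : ∑ v, ν v = 1 := by
    simp only [hν]; rw [Finset.sum_comm]; exact hsum
  have hA : ∑ u, ∑ v, π u v * μ u = ∑ u, (μ u)^2 := by
    refine Finset.sum_congr rfl fun u _ => ?_
    rw [← Finset.sum_mul, ← hμ u]; ring
  have hB : ∑ u, ∑ v, π u v * ν v = ∑ v, (ν v)^2 := by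
    rw [Finset.sum_comm]
    refine Finset.sum_congr rfl fun v _ => ?_
    rw [← Finset.sum_mul, ← hν v]; ring
  set S2 := ∑ u, ∑ v, (π u v)^2 with hS2
  set A := ∑ u, (μ u)^2 with hAdef
  set B := ∑ v, (ν v)^2 with hBdef
  have key : ∑ u, ∑ v, (π u v - (μ u / q + ν v / p - 1/(p*q)))^2
      = S2 - A/q - B/p + 1/(p*q) := by
    have expand : ∀ u v, (π u v - (μ u / q + ν v / p - 1/(p*q)))^2
        = (π u v)^2 - (2/q) * (π u v * μ u) - (2/p) * (π u v * ν v)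
          + (2/(p*q)) * π u v + (1/q^2) * (μ u)^2 + (2/(p*q)) * (μ u * ν v)
          - (2/(p*q^2)) * μ u + (1/p^2) * (ν v)^2 - (2/(p^2*q)) * ν v
          + 1/(p^2*q^2) := by
      intro u v; field_simp; ring
    calc ∑ u, ∑ v, (π u v - (μ u / q + ν v / p - 1/(p*q)))^2
        = ∑ u, ∑ v, ((π u v)^2 - (2/q) * (π u v * μ u) - (2/p) * (π u v * ν v)
          + (2/(p*q)) * π u v + (1/q^2) * (μ u)^2 + (2/(p*q)) * (μ u * ν v)
          - (2/(p*q^2)) * μ u + (1/p^2) * (ν v)^2 - (2/(p^2*q)) * ν v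
          + 1/(p^2*q^2)) := by
          exact Finset.sum_congr rfl fun u _ => Finset.sum_congr rfl fun v _ => expand u v
      _ = S2 - A/q - B/p + 1/(p*q) := by
          simp only [Finset.sum_add_distrib, Finset.sum_sub_distrib,
            ← Finset.mul_sum, ← Finset.sum_mul, Finset.sum_const, Finset.card_fin,
            nsmul_eq_mul]
          have hμμ : ∑ i : Fin p, (∑ j : Fin q, π i j) * μ i = A := by
            rw [hAdef]
            exact Finset.sum_congr rfl fun i _ => by rw [← hμ i]; ring
          rw [hsum, hμμ, hB, hμ1, hν1, ← hAdef, ← hBdef, ← hS2]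
          field_simp
          ring
  have hmain : (((p : ℝ) - 1) * ((q : ℝ) - 1) * S2
        + ∑ u, ∑ v, π u v * (1 - μ u - ν v + π u v))
      - (((p : ℝ) - 1) * ∑ u, ∑ v, π u v * (μ u - π u v)
        + ((q : ℝ) - 1) * ∑ u, ∑ v, π u v * (ν v - π u v))
      = (p:ℝ) * (q:ℝ) * ∑ u, ∑ v, (π u v - (μ u / q + ν v / p - 1/(p*q)))^2 := by
    rw [key]
    have e1 : ∑ u, ∑ v, π u v * (1 - μ u - ν v + π u v)
        = 1 - A - B + S2 := by
      have h0 : ∀ u v, π u v * (1 - μ u - ν v + π u v)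
          = π u v - π u v * μ u - π u v * ν v + (π u v)^2 := by intro u v; ring
      simp only [h0, Finset.sum_add_distrib, Finset.sum_sub_distrib]
      rw [hsum, hA, hB, ← hS2]
    have e2 : ∑ u, ∑ v, π u v * (μ u - π u v) = A - S2 := by
      have h0 : ∀ u v, π u v * (μ u - π u v) = π u v * μ u - (π u v)^2 := by
        intro u v; ring
      simp only [h0, Finset.sum_sub_distrib]
      rw [hA, ← hS2]
    have e3 : ∑ u, ∑ v, π u v * (ν v - π u v) = B - S2 := by
      have h0 : ∀ u v, π u v * (ν v - π u v) = π u v * ν v - (π u v)^2 := by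
        intro u v; ring
      simp only [h0, Finset.sum_sub_distrib]
      rw [hB, ← hS2]
    rw [e1, e2, e3]
    field_simp
    ring
  constructor
  · intro h
    have hz : (p:ℝ) * (q:ℝ) * ∑ u, ∑ v, (π u v - (μ u / q + ν v / p - 1/(p*q)))^2 = 0 := by
      rw [← hmain, h]; ring
    have hpq : (p:ℝ) * (q:ℝ) ≠ 0 := by positivity
    have hz2 : ∑ u, ∑ v, (π u v - (μ u / q + ν v / p - 1/(p*q)))^2 = 0 :=
      (mul_eq_zero.mp hz).resolve_left hpq
    intro u v
    have h1 := (Finset.sum_eq_zero_iff_of_nonneg (fun u _ => Finset.sum_nonneg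
      (fun v _ => sq_nonneg _))).mp hz2 u (Finset.mem_univ u)
    have h2 := (Finset.sum_eq_zero_iff_of_nonneg (fun v _ => sq_nonneg _)).mp h1 v
      (Finset.mem_univ v)
    have h3 := sq_eq_zero_iff.mp h2
    linarith [h3]
  · intro h
    have hz : ∑ u, ∑ v, (π u v - (μ u / q + ν v / p - 1/(p*q)))^2 = 0 := by
      refine Finset.sum_eq_zero fun u _ => Finset.sum_eq_zero fun v _ => ?_
      rw [h u v]; ring
    rw [hz, mul_zero] at hmain
    linarith [hmain]
end
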